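/- Let A = ⊕_{m ∈ σ^∨ ∩ M} A_m χ^m ⊆ K₀[M] be an M-graded domain, where K₀ is a field containing K and each A_m ⊆ K₀, and let ∂ be a homogeneous locally nilpotent K-derivation on A with ∂(K₀ ∩ A) = 0 such that ∂ extends to a K₀-derivation of K₀[σ^∨ ∩ M]. Then this extension is a locally nilpotent K₀-derivation on K₀[σ^∨ ∩ M]. -/

import Mathlib

open scoped BigOperators Pointwise

noncomputable section

/-- Rational `n`-space `N_ℚ ≅ M_ℚ ≅ ℚⁿ`. -/
abbrev Vec (n : ℕ) := Fin n → ℚ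

/-- The natural pairing `M_ℚ × N_ℚ → ℚ`. -/
def pairQ {n : ℕ} (m p : Vec n) : ℚ := ∑ i, m i * p i

/-- The dual cone of a subset of `N_ℚ`. -/
def dualCone {n : ℕ} (σ : Set (Vec n)) : Set (Vec n) :=
  {m | ∀ p ∈ σ, 0 ≤ pairQ m p}

/-- Inclusion of the lattice `M = ℤⁿ` into `M_ℚ`. -/
def toQ {n : ℕ} (v : Fin n → ℤ) : Vec n := fun i => (v i : ℚ)

/-- A vector of `ℚⁿ` is a lattice vector if all its coordinates are integers. -/
def IsLatticeVec {n : ℕ} (v : Vec n) : Prop := ∀ i, ∃ z : ℤ, v i = (z : ℚ)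

/-- The convex cone generated by a set: all finite nonnegative rational combinations. -/
def coneHull {n : ℕ} (S : Set (Vec n)) : Set (Vec n) :=
  {x | ∃ (G : Finset (Vec n)) (c : Vec n → ℚ), ↑G ⊆ S ∧ (∀ g, 0 ≤ c g) ∧
    x = ∑ g ∈ G, c g • g}

/-- A rational polyhedral cone: the cone generated by finitely many lattice vectors. -/
def IsRatPolyCone {n : ℕ} (σ : Set (Vec n)) : Prop :=
  ∃ G : Finset (Vec n), (∀ g ∈ G, IsLatticeVec g) ∧ σ = coneHull ↑G

/-- A cone is pointed if it contains no line through the origin. -/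
def PointedCone' {n : ℕ} (σ : Set (Vec n)) : Prop := σ ∩ (-σ) ⊆ {0}

/-- A cone is of full dimension if it spans the ambient space. -/
def FullDim {n : ℕ} (σ : Set (Vec n)) : Prop := Submodule.span ℚ σ = ⊤

/-- `ρ` is the extremal ray of `σ` generated by the primitive lattice vector `ν`. -/
def IsExtremalRay {n : ℕ} (σ ρ : Set (Vec n)) (ν : Vec n) : Prop :=
  IsLatticeVec ν ∧ ν ≠ 0 ∧ (∀ c : ℚ, 0 < c → IsLatticeVec (c • ν) → 1 ≤ c) ∧
  ρ = {x | ∃ c : ℚ, 0 ≤ c ∧ x = c • ν} ∧ ρ ⊆ σ ∧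
  (∀ x ∈ σ, ∀ y ∈ σ, x + y ∈ ρ → x ∈ ρ)

/-- The submonoid `σ^∨ ∩ M` of lattice points of the dual cone. -/
def latticeCone {n : ℕ} (σ : Set (Vec n)) : AddSubmonoid (Fin n → ℤ) where
  carrier := {m | toQ m ∈ dualCone σ}
  zero_mem' := by
    intro p hp
    simp [pairQ, toQ]
  add_mem' := by
    intro a b ha hb p hp
    have h : pairQ (toQ (a + b)) p = pairQ (toQ a) p + pairQ (toQ b) p := by
      simp [pairQ, toQ, add_mul, Finset.sum_add_distrib]
    rw [h]
    exact add_nonneg (ha p hp) (hb p hp)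

/-- A derivation is locally nilpotent if every element is annihilated by some iterate. -/
def IsLND {R A : Type*} [CommRing R] [CommRing A] [Algebra R A]
    (D : Derivation R A A) : Prop :=
  ∀ a : A, ∃ k : ℕ, (⇑D)^[k] a = 0



section Key
open AddMonoidAlgebra
variable {G : Type*} [AddCommMonoid G] {K₀ : Type*} [Field K₀] [CharZero K₀]
  (D : Derivation K₀ (AddMonoidAlgebra K₀ G) (AddMonoidAlgebra K₀ G))

omit [CharZero K₀] in
theorem iterD_zero : ∀ t : ℕ, (⇑D)^[t] (0 : AddMonoidAlgebra K₀ G) = 0 := by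
  intro t; induction t with
  | zero => rfl
  | succ t ih => rw [Function.iterate_succ_apply, map_zero, ih]

omit [CharZero K₀] in
theorem iterD_add (x y : AddMonoidAlgebra K₀ G) :
    ∀ t : ℕ, (⇑D)^[t] (x + y) = (⇑D)^[t] x + (⇑D)^[t] y := by
  intro t; induction t generalizing x y with
  | zero => rfl
  | succ t ih => rw [Function.iterate_succ_apply, map_add, ih, Function.iterate_succ_apply,
      Function.iterate_succ_apply]

omit [CharZero K₀] in
theorem iterD_smul (c : K₀) (x : AddMonoidAlgebra K₀ G) :
    ∀ t : ℕ, (⇑D)^[t] (c • x) = c • (⇑D)^[t] x := by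
  intro t; induction t generalizing x with
  | zero => rfl
  | succ t ih => rw [Function.iterate_succ_apply, D.map_smul, ih, Function.iterate_succ_apply]

omit [CharZero K₀] in
theorem iterD_mono {k k' : ℕ} (h : k ≤ k') {x : AddMonoidAlgebra K₀ G}
    (hx : (⇑D)^[k] x = 0) : (⇑D)^[k'] x = 0 := by
  have h2 : k' = (k' - k) + k := (Nat.sub_add_cancel h).symm
  rw [h2, Function.iterate_add_apply, hx, iterD_zero]

theorem keyLND
    (hsingle : ∀ m : G, ∃ (m' : G) (c' : K₀), D (single m 1) = single m' c')
    (hkill : ∀ m : G, ∃ r : ℕ, 0 < r ∧ ∃ k : ℕ, (⇑D)^[k] (single (r • m) (1:K₀)) = 0) :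
    ∀ a : AddMonoidAlgebra K₀ G, ∃ k : ℕ, (⇑D)^[k] a = 0 := by
  classical
  -- choice functions
  let μ : G → G := fun m => (hsingle m).choose
  let lam : G → K₀ := fun m => (hsingle m).choose_spec.choose
  have hspec : ∀ m : G, D (single m 1) = single (μ m) (lam m) := fun m =>
    (hsingle m).choose_spec.choose_spec
  -- the "sum of coefficients" functional
  let T : AddMonoidAlgebra K₀ G → K₀ := fun f => f.coeff.sum fun _ c => c
  have Tsingle : ∀ (a : G) (b : K₀), T (single a b) = b := fun a b => by
    show (Finsupp.single a b).sum (fun _ c => c) = b; exact Finsupp.sum_single_index rfl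
  have Tadd : ∀ x y, T (x + y) = T x + T y := fun x y => by
    show (x.coeff + y.coeff).sum (fun _ c => c) = x.coeff.sum (fun _ c => c) + y.coeff.sum (fun _ c => c)
    exact Finsupp.sum_add_index' (fun _ => rfl) (fun _ _ _ => rfl)
  -- D on general singles
  have hDsingle : ∀ (m : G) (c : K₀), D (single m c) = single (μ m) (c * lam m) := by
    intro m c
    have h1 : (single m c : AddMonoidAlgebra K₀ G) = c • single m 1 := by
      rw [AddMonoidAlgebra.smul_single', mul_one]
    rw [h1, D.map_smul, hspec, AddMonoidAlgebra.smul_single']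
  -- additivity of lam
  have lam_add : ∀ a b : G, lam (a + b) = lam a + lam b := by
    intro a b
    have h2 : D (single (a+b) (1:K₀)) =
        single a 1 * single (μ b) (lam b) + single b 1 * single (μ a) (lam a) := by
      have h1 : (single (a + b) (1:K₀) : AddMonoidAlgebra K₀ G)
          = single a 1 * single b 1 := by
        rw [AddMonoidAlgebra.single_mul_single, one_mul]
      rw [h1, Derivation.leibniz, smul_eq_mul, smul_eq_mul, hspec, hspec]
    have h3 := congrArg T h2
    rw [hspec, Tsingle, Tadd, AddMonoidAlgebra.single_mul_single,
      AddMonoidAlgebra.single_mul_single, one_mul, one_mul, Tsingle, Tsingle] at h3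
    rw [h3]; ring
  have lam_zero : lam 0 = 0 := by
    have h := lam_add 0 0
    rw [add_zero] at h
    exact (left_eq_add.mp h)
  have lam_nsmul : ∀ (t : ℕ) (a : G), lam (t • a) = (t:K₀) * lam a := by
    intro t a; induction t with
    | zero => simp [lam_zero]
    | succ t ih => rw [succ_nsmul, lam_add, ih]; push_cast; ring
  -- paths
  let path : G → ℕ → G := fun m0 k => (fun x => μ x)^[k] m0
  have path_succ : ∀ (x : G) (k : ℕ), path x (k+1) = μ (path x k) := fun x k =>
    Function.iterate_succ_apply' _ _ _
  let P : G → ℕ → K₀ := fun m0 k => ∏ i ∈ Finset.range k, lam (path m0 i)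
  have iter_single : ∀ (k : ℕ) (m0 : G) (c : K₀),
      (⇑D)^[k] (single m0 c) = single (path m0 k) (c * P m0 k) := by
    intro k; induction k with
    | zero => intro m0 c; simp [P, path]
    | succ k ih =>
      intro m0 c
      rw [Function.iterate_succ_apply', ih, hDsingle, ← path_succ]
      congr 1
      show c * P m0 k * lam (path m0 k) = c * P m0 (k+1)
      rw [show P m0 (k+1) = P m0 k * lam (path m0 k) from Finset.prod_range_succ _ _]
      ring
  -- key single claim
  have key_single : ∀ m0 : G, ∃ k, (⇑D)^[k] (single m0 (1:K₀)) = 0 := by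
    intro m0
    by_contra hcon
    push_neg at hcon
    have hlam : ∀ k, lam (path m0 k) ≠ 0 := by
      intro k hzero
      apply hcon (k+1)
      rw [iter_single]
      have hP0 : P m0 (k+1) = 0 := Finset.prod_eq_zero (Finset.self_mem_range_succ k) hzero
      rw [hP0, mul_zero]; exact single_eq_zero.mpr rfl
    -- homogeneity degree comparison
    have dag : ∀ a b : G, lam a ≠ 0 → lam b ≠ 0 → a + μ b = b + μ a := by
      intro a b ha hb
      by_contra hne
      have h2 : (single (μ (a+b)) (lam (a+b)) : AddMonoidAlgebra K₀ G) =
          single (a + μ b) (lam b) + single (b + μ a) (lam a) := by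
        rw [← hspec]
        have h1 : (single (a + b) (1:K₀) : AddMonoidAlgebra K₀ G)
            = single a 1 * single b 1 := by
          rw [AddMonoidAlgebra.single_mul_single, one_mul]
        rw [h1, Derivation.leibniz, smul_eq_mul, smul_eq_mul, hspec, hspec,
          AddMonoidAlgebra.single_mul_single, AddMonoidAlgebra.single_mul_single,
          one_mul, one_mul]
      have v1 : (single (μ (a+b)) (lam (a+b)) : AddMonoidAlgebra K₀ G).coeff (a + μ b) ≠ 0 := by
        rw [h2, coeff_add, Finsupp.add_apply, coeff_single, coeff_single, Finsupp.single_eq_same,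
          Finsupp.single_eq_of_ne' (fun h => hne h.symm), add_zero]
        exact hb
      have v2 : (single (μ (a+b)) (lam (a+b)) : AddMonoidAlgebra K₀ G).coeff (b + μ a) ≠ 0 := by
        rw [h2, coeff_add, Finsupp.add_apply, coeff_single, coeff_single, Finsupp.single_eq_same,
          Finsupp.single_eq_of_ne' hne,
          zero_add]
        exact ha
      have w1 := Finset.mem_singleton.mp
        (Finsupp.support_single_subset (Finsupp.mem_support_iff.mpr v1))
      have w2 := Finset.mem_singleton.mp
        (Finsupp.support_single_subset (Finsupp.mem_support_iff.mpr v2))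
      exact hne (w1.trans w2.symm)
    -- arithmetic progression of lam along path
    have step : ∀ k, lam (path m0 (k+1)) =
        lam (path m0 k) + (lam (path m0 1) - lam (path m0 0)) := by
      intro k; induction k with
      | zero => ring
      | succ k ih =>
        have hid : path m0 k + path m0 (k+2) = path m0 (k+1) + path m0 (k+1) := by
          have hd := dag (path m0 k) (path m0 (k+1)) (hlam k) (hlam (k+1))
          rw [← path_succ, ← path_succ] at hd
          exact hd
        have e1 := congrArg lam hid
        rw [lam_add, lam_add] at e1
        linear_combination e1 + ih
    have lin : ∀ k : ℕ, lam (path m0 k) =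
        lam (path m0 0) + (k:K₀) * (lam (path m0 1) - lam (path m0 0)) := by
      intro k; induction k with
      | zero => push_cast; ring
      | succ k ih => rw [step k, ih]; push_cast; ring
    -- per-k relation coming from local nilpotency of multiples
    have rel : ∀ k : ℕ, ∃ r j : ℕ, 0 < r ∧
        (r:K₀) * lam (path m0 0) + ((r*k + j : ℕ):K₀) *
          (lam (path m0 1) - lam (path m0 0)) = 0 := by
      intro k
      obtain ⟨r, hr, k', hk'⟩ := hkill (path m0 k)
      rw [iter_single, one_mul] at hk'
      have hP : P (r • path m0 k) k' = 0 := AddMonoidAlgebra.single_eq_zero.mp hk'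
      have hex : ∃ i, lam (path (r • path m0 k) i) = 0 := by
        by_contra hno; push_neg at hno
        exact absurd hP (Finset.prod_ne_zero_iff.mpr fun i _ => hno i)
      have hi0 : lam (path (r • path m0 k) (Nat.find hex)) = 0 := Nat.find_spec hex
      have hmin : ∀ t < Nat.find hex, lam (path (r • path m0 k) t) ≠ 0 :=
        fun t ht => Nat.find_min hex ht
      have claim : ∀ t, t ≤ Nat.find hex →
          path (r • path m0 k) t + t • (path m0 0) =
            r • path m0 k + t • (path m0 1) := by
        intro t; induction t with
        | zero => intro _; simp only [zero_nsmul, add_zero]; rfl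
        | succ t ih =>
          intro ht
          have ht' : t < Nat.find hex := Nat.lt_of_succ_le ht
          have ihh := ih (le_of_lt ht')
          have hd := dag (path (r • path m0 k) t) (path m0 0) (hmin t ht') (hlam 0)
          rw [path_succ, succ_nsmul, succ_nsmul]
          calc μ (path (r • path m0 k) t) + (t • path m0 0 + path m0 0)
              = (path m0 0 + μ (path (r • path m0 k) t)) + t • path m0 0 := by abel
            _ = (path (r • path m0 k) t + μ (path m0 0)) + t • path m0 0 := by rw [hd]
            _ = (path (r • path m0 k) t + t • path m0 0) + μ (path m0 0) := by abel
            _ = (r • path m0 k + t • path m0 1) + μ (path m0 0) := by rw [ihh]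
            _ = (r • path m0 k + t • path m0 1) + path m0 1 := by rw [← path_succ]
            _ = r • path m0 k + (t • path m0 1 + path m0 1) := by abel
      have idd := claim (Nat.find hex) le_rfl
      have e2 := congrArg lam idd
      rw [lam_add, lam_add, hi0, zero_add, lam_nsmul, lam_nsmul, lam_nsmul] at e2
      refine ⟨r, Nat.find hex, hr, ?_⟩
      have l1 := lin k
      have hm00 : lam m0 = lam (path m0 0) := rfl
      rw [l1, lin 1] at e2
      push_cast at e2 ⊢
      linear_combination -e2
    -- extract contradiction from two relations
    obtain ⟨r0, j0, hr0, e0⟩ := rel 0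
    obtain ⟨rK, jK, hrK, eK⟩ := rel (j0+1)
    have hlt : rK * (r0*0 + j0) < r0 * (rK*(j0+1) + jK) := by
      calc rK * (r0*0 + j0) = rK * j0 := by ring_nf
        _ < rK * (j0+1) := by exact (Nat.mul_lt_mul_left hrK).mpr (Nat.lt_succ_self j0)
        _ ≤ rK*(j0+1) + jK := Nat.le_add_right _ _
        _ ≤ r0 * (rK*(j0+1) + jK) := Nat.le_mul_of_pos_left _ hr0
    have hd0 : lam (path m0 1) - lam (path m0 0) = 0 := by
      have hcast : ((r0 * (rK*(j0+1) + jK) : ℕ):K₀) ≠ ((rK * (r0*0 + j0) : ℕ):K₀) := by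
        exact_mod_cast (Nat.ne_of_gt hlt)
      have hz : (((r0 * (rK*(j0+1) + jK) : ℕ):K₀) - ((rK * (r0*0 + j0) : ℕ):K₀)) *
          (lam (path m0 1) - lam (path m0 0)) = 0 := by
        push_cast at e0 eK ⊢
        linear_combination (r0:K₀) * eK - (rK:K₀) * e0
      rcases mul_eq_zero.mp hz with h | h
      · exact absurd h (sub_ne_zero.mpr hcast)
      · exact h
    have hfin : (r0:K₀) * lam (path m0 0) = 0 := by
      rw [hd0] at e0
      linear_combination e0
    have hr0' : (r0:K₀) ≠ 0 := Nat.cast_ne_zero.mpr hr0.ne'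
    exact hlam 0 ((mul_eq_zero.mp hfin).resolve_left hr0')
  -- conclude for all elements
  intro a
  induction a using AddMonoidAlgebra.induction with
  | zero => exact ⟨0, rfl⟩
  | single_add a b f hfa hb ih =>
    obtain ⟨k1, hk1⟩ := key_single a
    obtain ⟨k2, hk2⟩ := ih
    refine ⟨max k1 k2, ?_⟩
    rw [iterD_add]
    have hP1 : P a k1 = 0 := by
      rw [iter_single, one_mul] at hk1
      exact AddMonoidAlgebra.single_eq_zero.mp hk1
    have h1 : (⇑D)^[k1] (single a b) = 0 := by
      rw [iter_single, hP1, mul_zero]; exact single_eq_zero.mpr rfl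
    rw [iterD_mono D (le_max_left _ _) h1, iterD_mono D (le_max_right _ _) hk2, add_zero]

end Key


open AddMonoidAlgebra in
/-- Lemma 1.9(ii) (LND-tensor): let `A ⊆ K₀[σ^∨ ∩ M]` be a graded subalgebra whose
weight cone is all of `σ^∨` (every lattice point of `σ^∨` has a positive multiple with
nonzero piece), and let `D` be a `K₀`-derivation of `K₀[σ^∨ ∩ M]` stabilizing `A`,
homogeneous and locally nilpotent on `A`.  Then `D` is locally nilpotent on all of
`K₀[σ^∨ ∩ M]`. -/
theorem stmt15 {n : ℕ} (K K₀ : Type*) [Field K] [CharZero K] [Field K₀] [Algebra K K₀]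
    (σ : Set (Vec n))
    (hσ : IsRatPolyCone σ) (hpt : PointedCone' σ) (hfull : FullDim (dualCone σ))
    (A : Subalgebra K (AddMonoidAlgebra K₀ ↥(latticeCone σ)))
    (hgraded : ∀ x ∈ A, ∀ m : latticeCone σ, single m (x.coeff m) ∈ A)
    (hweight : ∀ m : latticeCone σ, ∃ r : ℕ, 0 < r ∧
      ∃ c : K₀, c ≠ 0 ∧ single (r • m) c ∈ A)
    (D : Derivation K₀ (AddMonoidAlgebra K₀ ↥(latticeCone σ))
      (AddMonoidAlgebra K₀ ↥(latticeCone σ)))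
    (hstab : ∀ x ∈ A, D x ∈ A)
    (hlndA : ∀ x ∈ A, ∃ k : ℕ, (⇑D)^[k] x = 0)
    (hhom : ∀ (m : latticeCone σ) (c : K₀), single m c ∈ A →
      ∃ (m' : latticeCone σ) (c' : K₀), D (single m c) = single m' c') :
    IsLND D := by
  classical
  haveI : CharZero K₀ := charZero_of_injective_algebraMap (algebraMap K K₀).injective
  haveI : Nonempty ↥(latticeCone σ) := ⟨0⟩
  -- Step 1: D sends monomials to monomials
  have hsingle : ∀ m : ↥(latticeCone σ),
      ∃ (m' : ↥(latticeCone σ)) (c' : K₀), D (single m 1) = single m' c' := by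
    intro m
    obtain ⟨r, hr, c, hc, hA⟩ := hweight m
    obtain ⟨m₁, c₁, hD1⟩ := hhom (r • m) c hA
    have hrK : ((r:K₀)) ≠ 0 := Nat.cast_ne_zero.mpr hr.ne'
    -- D of the normalized monomial
    have h2 : D (single (r • m) (1:K₀)) = single m₁ (c⁻¹ * c₁) := by
      have e1 : (single (r • m) c : AddMonoidAlgebra K₀ ↥(latticeCone σ))
          = c • single (r • m) 1 := by rw [AddMonoidAlgebra.smul_single', mul_one]
      have h3 : c • D (single (r • m) (1:K₀)) = single m₁ c₁ := by
        rw [← D.map_smul, ← e1, hD1]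
      calc D (single (r • m) (1:K₀))
          = c⁻¹ • (c • D (single (r • m) (1:K₀))) := by
            rw [smul_smul, inv_mul_cancel₀ hc, one_smul]
        _ = c⁻¹ • (single m₁ c₁ : AddMonoidAlgebra K₀ ↥(latticeCone σ)) := by rw [h3]
        _ = single m₁ (c⁻¹ * c₁) := by rw [AddMonoidAlgebra.smul_single']
    -- power rule
    have hpow : (single m (1:K₀) : AddMonoidAlgebra K₀ ↥(latticeCone σ))^r
        = single (r • m) 1 := by
      rw [AddMonoidAlgebra.single_pow, one_pow]
    have h4 : (single ((r-1) • m) (1:K₀) : AddMonoidAlgebra K₀ ↥(latticeCone σ)) *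
        D (single m 1) = single m₁ ((r:K₀)⁻¹ * (c⁻¹ * c₁)) := by
      have h5 : D (single (r • m) (1:K₀)) =
          (r:K₀) • ((single ((r-1) • m) (1:K₀) :
            AddMonoidAlgebra K₀ ↥(latticeCone σ)) * D (single m 1)) := by
        rw [← hpow, Derivation.leibniz_pow, Nat.cast_smul_eq_nsmul K₀ r]
        congr 1
        rw [AddMonoidAlgebra.single_pow, one_pow, smul_eq_mul]
      have h6 := h2
      rw [h5] at h6
      calc (single ((r-1) • m) (1:K₀) : AddMonoidAlgebra K₀ ↥(latticeCone σ)) *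
            D (single m 1)
          = (r:K₀)⁻¹ • ((r:K₀) • ((single ((r-1) • m) (1:K₀) :
              AddMonoidAlgebra K₀ ↥(latticeCone σ)) * D (single m 1))) := by
            rw [smul_smul, inv_mul_cancel₀ hrK, one_smul]
        _ = (r:K₀)⁻¹ • (single m₁ (c⁻¹ * c₁) : AddMonoidAlgebra K₀ ↥(latticeCone σ)) := by
            rw [h6]
        _ = single m₁ ((r:K₀)⁻¹ * (c⁻¹ * c₁)) := by rw [AddMonoidAlgebra.smul_single']
    -- support of D (single m 1) has at most one element
    have hmul : ((single ((r-1) • m) (1:K₀) : AddMonoidAlgebra K₀ ↥(latticeCone σ)) *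
        D (single m 1)).coeff = Finsupp.mapDomain (fun s => (r-1) • m + s) (D (single m 1)).coeff := by
      rw [AddMonoidAlgebra.mul_def, coeff_single, Finsupp.sum_single_index]
      · simp only [one_mul, coeff_finsuppSum, coeff_single]; rfl
      · simp
    have hinj : Function.Injective (fun s : ↥(latticeCone σ) => (r-1) • m + s) := by
      intro x y hxy
      have h7 : ((r-1) • m : ↥(latticeCone σ)) + x = (r-1) • m + y := hxy
      have h8 : (((r-1) • m : ↥(latticeCone σ)) : Fin n → ℤ) + x =
          (((r-1) • m : ↥(latticeCone σ)) : Fin n → ℤ) + y := by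
        exact_mod_cast congrArg Subtype.val h7
      exact Subtype.ext (add_left_cancel h8)
    have hsupp : (D (single m (1:K₀))).coeff.support.card ≤ 1 := by
      have h9 : ((single ((r-1) • m) (1:K₀) : AddMonoidAlgebra K₀ ↥(latticeCone σ)) *
          D (single m 1)).coeff.support =
          Finset.image (fun s => (r-1) • m + s) (D (single m (1:K₀))).coeff.support := by
        rw [hmul]; exact Finsupp.mapDomain_support_of_injective hinj (D (single m (1:K₀))).coeff
      calc (D (single m (1:K₀))).coeff.support.card
          = (Finset.image (fun s => (r-1) • m + s) (D (single m (1:K₀))).coeff.support).card :=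
            (Finset.card_image_of_injective _ hinj).symm
        _ = ((single ((r-1) • m) (1:K₀) : AddMonoidAlgebra K₀ ↥(latticeCone σ)) *
            D (single m 1)).coeff.support.card := by rw [h9]
        _ ≤ 1 := by
            rw [h4, coeff_single]
            exact le_trans (Finset.card_le_card Finsupp.support_single_subset)
              (by simp)
    obtain ⟨a, b, hg⟩ := Finsupp.card_support_le_one'.mp hsupp
    exact ⟨a, b, by rw [← coeff_inj, hg, coeff_single]⟩
  -- Step 2: nilpotency on normalized monomials with weights in A
  have hkill : ∀ m : ↥(latticeCone σ), ∃ r : ℕ, 0 < r ∧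
      ∃ k : ℕ, (⇑D)^[k] (single (r • m) (1:K₀)) = 0 := by
    intro m
    obtain ⟨r, hr, c, hc, hA⟩ := hweight m
    obtain ⟨k, hk⟩ := hlndA _ hA
    refine ⟨r, hr, k, ?_⟩
    have e1 : (single (r • m) c : AddMonoidAlgebra K₀ ↥(latticeCone σ))
        = c • single (r • m) 1 := by rw [AddMonoidAlgebra.smul_single', mul_one]
    rw [e1, iterD_smul] at hk
    exact (smul_eq_zero.mp hk).resolve_left hc
  exact keyLND D hsingle hkill
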